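/- Let g, ℓ, ω > 0, A ∈ ℝ, T := 2π/ω, and σ ∈ {1, −1}. Define α_σ(t) := σ * (A ω² cos(ω t) − g) / ℓ and H_σ(t) := !![0, 1; α_σ(t), 0], and let Ω⁽¹⁾ := ∫₀ᵀ H_σ(t) dt and U⁽³⁾ := ∫₀ᵀ ∫₀^{t₁} ∫₀^{t₂} H_σ(t₁) * H_σ(t₂) * H_σ(t₃) dt₃ dt₂ dt₁. Then the third Magnus term satisfies Ω⁽³⁾ := U⁽³⁾ − (1/6) • (Ω⁽¹⁾)³ = T • !![0, −2σA/ℓ; −A² ω²/(2 ℓ²) − 2 A g/ℓ², 0]. -/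

import Mathlib

attribute [local instance] Matrix.linftyOpNormedRing Matrix.linftyOpNormedAlgebra

/-- The linearized Kapitza system matrix `H_σ(t) = !![0, 1; α_σ(t), 0]` with
`α_σ(t) = σ (A ω² cos(ω t) − g) / ℓ`. -/
noncomputable def kapitzaH (g ℓ ω A σ : ℝ) (t : ℝ) : Matrix (Fin 2) (Fin 2) ℝ :=
  !![0, 1; σ * (A * ω ^ 2 * Real.cos (ω * t) - g) / ℓ, 0]

noncomputable def E01 : Matrix (Fin 2) (Fin 2) ℝ := !![0, 1; 0, 0]
noncomputable def E10 : Matrix (Fin 2) (Fin 2) ℝ := !![0, 0; 1, 0]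

lemma decomp (x y : ℝ) : !![(0:ℝ), x; y, 0] = x • E01 + y • E10 := by
  ext i j
  fin_cases i <;> fin_cases j <;> simp [E01, E10]

lemma matSplit {a b : ℝ} {f g : ℝ → ℝ} (hf : Continuous f) (hg : Continuous g) :
    (∫ t in a..b, (f t • E01 + g t • E10)) =
      (∫ t in a..b, f t) • E01 + (∫ t in a..b, g t) • E10 := by
  rw [intervalIntegral.integral_add (f := fun t => f t • E01) (g := fun t => g t • E10)
      ((hf.smul continuous_const).intervalIntegrable a b)
      ((hg.smul continuous_const).intervalIntegrable a b),
    intervalIntegral.integral_smul_const, intervalIntegral.integral_smul_const]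

lemma combo_sub (a b c d : ℝ) :
    (a • E01 + b • E10) - (c • E01 + d • E10) = (a - c) • E01 + (b - d) • E10 := by
  rw [sub_smul, sub_smul]
  abel

lemma tripleProd (x y z : ℝ) :
    !![(0:ℝ), 1; x, 0] * !![(0:ℝ), 1; y, 0] * !![(0:ℝ), 1; z, 0] = !![0, y; x * z, 0] := by
  simp [Matrix.mul_fin_two]

lemma cube (x y : ℝ) : (x • E01 + y • E10) ^ 3 = (x * y * x) • E01 + (y * x * y) • E10 := by
  rw [← decomp, ← decomp, pow_succ, pow_two, Matrix.mul_fin_two, Matrix.mul_fin_two]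
  ext i j
  fin_cases i <;> fin_cases j <;> simp

lemma hd_sin (ω u : ℝ) : HasDerivAt (fun t => Real.sin (ω * t)) (ω * Real.cos (ω * u)) u := by
  simpa [mul_comm, Function.comp_def] using (Real.hasDerivAt_sin (ω * u)).comp u ((hasDerivAt_id u).const_mul ω)

lemma hd_cos (ω u : ℝ) : HasDerivAt (fun t => Real.cos (ω * t)) (-(ω * Real.sin (ω * u))) u := by
  simpa [mul_comm, Function.comp_def] using (Real.hasDerivAt_cos (ω * u)).comp u ((hasDerivAt_id u).const_mul ω)

lemma L1 (P Q ω : ℝ) (hω : ω ≠ 0) (t : ℝ) :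
    (∫ u in (0:ℝ)..t, (P * Real.cos (ω * u) + Q)) = P * Real.sin (ω * t) / ω + Q * t := by
  have key : ∀ u ∈ Set.uIcc (0:ℝ) t,
      HasDerivAt (fun t => P * Real.sin (ω * t) / ω + Q * t) (P * Real.cos (ω * u) + Q) u := by
    intro u _
    have h := ((hd_sin ω u).const_mul P).div_const ω |>.add ((hasDerivAt_id u).const_mul Q)
    refine h.congr_deriv ?_
    field_simp
  rw [intervalIntegral.integral_eq_sub_of_hasDerivAt key
    ((by fun_prop : Continuous fun u => P * Real.cos (ω * u) + Q).intervalIntegrable 0 t)]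
  simp

lemma L2 (P Q ω : ℝ) (hω : ω ≠ 0) (t : ℝ) :
    (∫ u in (0:ℝ)..t, u * (P * Real.cos (ω * u) + Q)) =
      P * (t * Real.sin (ω * t) / ω + Real.cos (ω * t) / ω ^ 2 - 1 / ω ^ 2) + Q * t ^ 2 / 2 := by
  have key : ∀ u ∈ Set.uIcc (0:ℝ) t,
      HasDerivAt (fun t => P * (t * Real.sin (ω * t) / ω + Real.cos (ω * t) / ω ^ 2) + Q * t ^ 2 / 2)
        (u * (P * Real.cos (ω * u) + Q)) u := by
    intro u _
    have h := ((((hasDerivAt_id u).mul (hd_sin ω u)).div_const ω).add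
        ((hd_cos ω u).div_const (ω ^ 2))).const_mul P |>.add
        (((hasDerivAt_pow 2 u).const_mul Q).div_const 2)
    refine h.congr_deriv ?_
    simp only [id]
    field_simp
    ring
  rw [intervalIntegral.integral_eq_sub_of_hasDerivAt key
    ((by fun_prop : Continuous fun u => u * (P * Real.cos (ω * u) + Q)).intervalIntegrable 0 t)]
  simp
  ring

lemma L3 (P Q ω : ℝ) (hω : ω ≠ 0) (t : ℝ) :
    (∫ u in (0:ℝ)..t, (P * Real.sin (ω * u) / ω + Q * u)) =
      P * (1 - Real.cos (ω * t)) / ω ^ 2 + Q * t ^ 2 / 2 := by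
  have key : ∀ u ∈ Set.uIcc (0:ℝ) t,
      HasDerivAt (fun t => -(P * Real.cos (ω * t) / ω ^ 2) + Q * t ^ 2 / 2)
        (P * Real.sin (ω * u) / ω + Q * u) u := by
    intro u _
    have h := (((hd_cos ω u).const_mul P).div_const (ω ^ 2)).neg.add
        (((hasDerivAt_pow 2 u).const_mul Q).div_const 2)
    refine h.congr_deriv ?_
    field_simp
    ring
  rw [intervalIntegral.integral_eq_sub_of_hasDerivAt key
    ((by fun_prop : Continuous fun u => P * Real.sin (ω * u) / ω + Q * u).intervalIntegrable 0 t)]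
  simp
  field_simp
  ring

lemma L4 (P Q ω : ℝ) (hω : ω ≠ 0) (t : ℝ) :
    (∫ u in (0:ℝ)..t,
        (P * (u * Real.sin (ω * u) / ω + Real.cos (ω * u) / ω ^ 2 - 1 / ω ^ 2) + Q * u ^ 2 / 2)) =
      P * (-(t * Real.cos (ω * t)) / ω ^ 2 + 2 * Real.sin (ω * t) / ω ^ 3 - t / ω ^ 2) +
        Q * t ^ 3 / 6 := by
  have key : ∀ u ∈ Set.uIcc (0:ℝ) t,
      HasDerivAt (fun t =>
          P * (-(t * Real.cos (ω * t)) / ω ^ 2 + 2 * Real.sin (ω * t) / ω ^ 3 - t / ω ^ 2) +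
            Q * t ^ 3 / 6)
        (P * (u * Real.sin (ω * u) / ω + Real.cos (ω * u) / ω ^ 2 - 1 / ω ^ 2) + Q * u ^ 2 / 2)
        u := by
    intro u _
    have h := (((((hasDerivAt_id u).mul (hd_cos ω u)).neg.div_const (ω ^ 2)).add
        (((hd_sin ω u).const_mul 2).div_const (ω ^ 3))).sub
        ((hasDerivAt_id u).div_const (ω ^ 2))).const_mul P |>.add
        (((hasDerivAt_pow 3 u).const_mul Q).div_const 6)
    refine h.congr_deriv ?_
    simp only [id]
    field_simp
    ring
  rw [intervalIntegral.integral_eq_sub_of_hasDerivAt key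
    ((by fun_prop : Continuous fun u =>
        P * (u * Real.sin (ω * u) / ω + Real.cos (ω * u) / ω ^ 2 - 1 / ω ^ 2) +
          Q * u ^ 2 / 2).intervalIntegrable 0 t)]
  simp

lemma L5 (P Q ω : ℝ) (hω : ω ≠ 0) (t : ℝ) :
    (∫ u in (0:ℝ)..t,
        (P * Real.cos (ω * u) + Q) * (P * (1 - Real.cos (ω * u)) / ω ^ 2 + Q * u ^ 2 / 2)) =
      P ^ 2 * Real.sin (ω * t) / ω ^ 3 -
        P ^ 2 / ω ^ 2 * (t / 2 + Real.sin (ω * t) * Real.cos (ω * t) / (2 * ω)) +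
        P * Q / 2 * (t ^ 2 * Real.sin (ω * t) / ω + 2 * (t * Real.cos (ω * t)) / ω ^ 2 -
          2 * Real.sin (ω * t) / ω ^ 3) +
        Q * P * t / ω ^ 2 - Q * P * Real.sin (ω * t) / ω ^ 3 + Q ^ 2 * t ^ 3 / 6 := by
  have key : ∀ u ∈ Set.uIcc (0:ℝ) t,
      HasDerivAt (fun t =>
          P ^ 2 * Real.sin (ω * t) / ω ^ 3 -
            P ^ 2 / ω ^ 2 * (t / 2 + Real.sin (ω * t) * Real.cos (ω * t) / (2 * ω)) +
            P * Q / 2 * (t ^ 2 * Real.sin (ω * t) / ω + 2 * (t * Real.cos (ω * t)) / ω ^ 2 -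
              2 * Real.sin (ω * t) / ω ^ 3) +
            Q * P * t / ω ^ 2 - Q * P * Real.sin (ω * t) / ω ^ 3 + Q ^ 2 * t ^ 3 / 6)
        ((P * Real.cos (ω * u) + Q) * (P * (1 - Real.cos (ω * u)) / ω ^ 2 + Q * u ^ 2 / 2))
        u := by
    intro u _
    have h1 := ((hd_sin ω u).const_mul (P ^ 2)).div_const (ω ^ 3)
    have h2 := (((hasDerivAt_id u).div_const 2).add
        (((hd_sin ω u).mul (hd_cos ω u)).div_const (2 * ω))).const_mul (P ^ 2 / ω ^ 2)
    have h3 := (((((hasDerivAt_pow 2 u).mul (hd_sin ω u)).div_const ω).add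
        ((((hasDerivAt_id u).mul (hd_cos ω u)).const_mul 2).div_const (ω ^ 2))).sub
        (((hd_sin ω u).const_mul 2).div_const (ω ^ 3))).const_mul (P * Q / 2)
    have h4 := ((hasDerivAt_id u).const_mul (Q * P)).div_const (ω ^ 2)
    have h5 := ((hd_sin ω u).const_mul (Q * P)).div_const (ω ^ 3)
    have h6 := ((hasDerivAt_pow 3 u).const_mul (Q ^ 2)).div_const 6
    have h := ((((h1.sub h2).add h3).add h4).sub h5).add h6
    refine h.congr_deriv ?_
    have hsq : Real.sin (ω * u) ^ 2 = 1 - Real.cos (ω * u) ^ 2 := Real.sin_sq (ω * u)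
    simp only [id]
    field_simp
    linear_combination (6 * P ^ 2) * hsq
  rw [intervalIntegral.integral_eq_sub_of_hasDerivAt key
    ((by fun_prop : Continuous fun u =>
        (P * Real.cos (ω * u) + Q) *
          (P * (1 - Real.cos (ω * u)) / ω ^ 2 + Q * u ^ 2 / 2)).intervalIntegrable 0 t)]
  simp

set_option maxHeartbeats 1600000 in
/-- The third Magnus term for Kapitza's pendulum over one period `T = 2π/ω`:
`Ω⁽³⁾ = U⁽³⁾ − (1/6)(Ω⁽¹⁾)³ = T • !![0, −2σA/ℓ; −A²ω²/(2ℓ²) − 2Ag/ℓ², 0]`. -/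
theorem kapitza_magnus_third (g ℓ ω A σ : ℝ) (hg : 0 < g) (hℓ : 0 < ℓ) (hω : 0 < ω)
    (hσ : σ = 1 ∨ σ = -1) :
    (∫ t₁ in (0:ℝ)..(2 * Real.pi / ω), ∫ t₂ in (0:ℝ)..t₁, ∫ t₃ in (0:ℝ)..t₂,
        kapitzaH g ℓ ω A σ t₁ * kapitzaH g ℓ ω A σ t₂ * kapitzaH g ℓ ω A σ t₃) -
      (1 / 6 : ℝ) • (∫ t in (0:ℝ)..(2 * Real.pi / ω), kapitzaH g ℓ ω A σ t) ^ 3 =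
      (2 * Real.pi / ω) •
        !![0, -2 * σ * A / ℓ;
           -A ^ 2 * ω ^ 2 / (2 * ℓ ^ 2) - 2 * A * g / ℓ ^ 2, 0] := by
  have hω' : ω ≠ 0 := ne_of_gt hω
  have hℓ' : ℓ ≠ 0 := ne_of_gt hℓ
  set P : ℝ := σ * A * ω ^ 2 / ℓ with hP
  set Q : ℝ := -(σ * g) / ℓ with hQ
  set T : ℝ := 2 * Real.pi / ω with hT
  have hα : ∀ t, kapitzaH g ℓ ω A σ t = !![(0:ℝ), 1; P * Real.cos (ω * t) + Q, 0] := by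
    intro t
    unfold kapitzaH
    congr 1
    rw [hP, hQ]
    field_simp
    ring
  have hsin : Real.sin (ω * T) = 0 := by
    rw [hT, mul_div_assoc', mul_comm ω, mul_div_assoc, div_self hω', mul_one, Real.sin_two_pi]
  have hcos : Real.cos (ω * T) = 1 := by
    rw [hT, mul_div_assoc', mul_comm ω, mul_div_assoc, div_self hω', mul_one, Real.cos_two_pi]
  have inner : ∀ t₁ t₂ : ℝ,
      (∫ t₃ in (0:ℝ)..t₂,
          kapitzaH g ℓ ω A σ t₁ * kapitzaH g ℓ ω A σ t₂ * kapitzaH g ℓ ω A σ t₃) =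
        (t₂ * (P * Real.cos (ω * t₂) + Q)) • E01 +
          ((P * Real.cos (ω * t₁) + Q) * (P * Real.sin (ω * t₂) / ω + Q * t₂)) • E10 := by
    intro t₁ t₂
    simp only [hα, tripleProd]
    simp only [decomp]
    rw [matSplit (by fun_prop) (by fun_prop), intervalIntegral.integral_const,
      intervalIntegral.integral_const_mul, L1 P Q ω hω']
    simp [smul_smul]
  have middle : ∀ t₁ : ℝ,
      (∫ t₂ in (0:ℝ)..t₁, ∫ t₃ in (0:ℝ)..t₂,
          kapitzaH g ℓ ω A σ t₁ * kapitzaH g ℓ ω A σ t₂ * kapitzaH g ℓ ω A σ t₃) =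
        (P * (t₁ * Real.sin (ω * t₁) / ω + Real.cos (ω * t₁) / ω ^ 2 - 1 / ω ^ 2) +
            Q * t₁ ^ 2 / 2) • E01 +
          ((P * Real.cos (ω * t₁) + Q) *
            (P * (1 - Real.cos (ω * t₁)) / ω ^ 2 + Q * t₁ ^ 2 / 2)) • E10 := by
    intro t₁
    simp only [inner]
    rw [matSplit (by fun_prop) (by fun_prop), L2 P Q ω hω',
      intervalIntegral.integral_const_mul, L3 P Q ω hω']
  have outer :
      (∫ t₁ in (0:ℝ)..T, ∫ t₂ in (0:ℝ)..t₁, ∫ t₃ in (0:ℝ)..t₂,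
          kapitzaH g ℓ ω A σ t₁ * kapitzaH g ℓ ω A σ t₂ * kapitzaH g ℓ ω A σ t₃) =
        (P * (-(T * Real.cos (ω * T)) / ω ^ 2 + 2 * Real.sin (ω * T) / ω ^ 3 - T / ω ^ 2) +
            Q * T ^ 3 / 6) • E01 +
          (P ^ 2 * Real.sin (ω * T) / ω ^ 3 -
            P ^ 2 / ω ^ 2 * (T / 2 + Real.sin (ω * T) * Real.cos (ω * T) / (2 * ω)) +
            P * Q / 2 * (T ^ 2 * Real.sin (ω * T) / ω + 2 * (T * Real.cos (ω * T)) / ω ^ 2 -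
              2 * Real.sin (ω * T) / ω ^ 3) +
            Q * P * T / ω ^ 2 - Q * P * Real.sin (ω * T) / ω ^ 3 + Q ^ 2 * T ^ 3 / 6) • E10 := by
    simp only [middle]
    rw [matSplit (by fun_prop) (by fun_prop), L4 P Q ω hω', L5 P Q ω hω']
  have omega1 :
      (∫ t in (0:ℝ)..T, kapitzaH g ℓ ω A σ t) =
        T • E01 + (P * Real.sin (ω * T) / ω + Q * T) • E10 := by
    have : ∀ t : ℝ, kapitzaH g ℓ ω A σ t =
        (1 : ℝ) • E01 + (P * Real.cos (ω * t) + Q) • E10 := by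
      intro t
      rw [hα t, decomp]
    simp only [this]
    rw [matSplit continuous_const (by fun_prop), L1 P Q ω hω']
    simp
  rw [outer, omega1, hsin, hcos, cube, smul_add (1/6 : ℝ), smul_smul, smul_smul,
    combo_sub, decomp, smul_add, smul_smul, smul_smul]
  have hπ : Real.pi ≠ 0 := Real.pi_ne_zero
  congr 1
  · congr 1
    rw [hP, hQ, hT]
    clear_value P Q T
    clear hα inner middle outer omega1 hsin hcos hP hQ hT P Q T
    rcases hσ with h | h <;> subst h <;> field_simp <;> ring
  · congr 1
    rw [hP, hQ, hT]
    clear_value P Q T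
    clear hα inner middle outer omega1 hsin hcos hP hQ hT P Q T
    rcases hσ with h | h <;> subst h <;> field_simp <;> ring
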